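/- Let A ⊆ ℝ^n be a nonempty compact convex set, let φ_K : A → ℝ^m (K ∈ ℕ) converge continuously to φ : A → ℝ^m, and let φ be strictly P-convex. If Min φ ⊆ Li Min φ_K, then Eff φ ⊆ Li Eff φ_K: every ᾱ ∈ Eff φ is the limit of a sequence (α_K) with α_K ∈ Eff φ_K for all sufficiently large K. -/

import Mathlib

open Filter Topology

noncomputable section

/-- The set of minimal points of a set `C ⊆ ℝ^m` w.r.t. the componentwise order
(the partial order induced by the cone `P = ℝ^m₊`). -/
def minPts {m : ℕ} (C : Set (EuclideanSpace ℝ (Fin m))) : Set (EuclideanSpace ℝ (Fin m)) :=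
  {l ∈ C | ¬ ∃ l' ∈ C, l' ≠ l ∧ ∀ i, l' i ≤ l i}

/-- The set of minimal points of the image `g(Z)`. -/
def minOf {n m : ℕ} (Z : Set (EuclideanSpace ℝ (Fin n)))
    (g : EuclideanSpace ℝ (Fin n) → EuclideanSpace ℝ (Fin m)) :
    Set (EuclideanSpace ℝ (Fin m)) :=
  minPts (g '' Z)

/-- The efficient (Pareto-optimal) solution set of `g` on `Z`. -/
def effOf {n m : ℕ} (Z : Set (EuclideanSpace ℝ (Fin n)))
    (g : EuclideanSpace ℝ (Fin n) → EuclideanSpace ℝ (Fin m)) :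
    Set (EuclideanSpace ℝ (Fin n)) :=
  {z ∈ Z | g z ∈ minOf Z g}

/-- The weakly efficient solution set: `z* ∈ Z` such that there is no `z ∈ Z` with
`gᵢ(z) < gᵢ(z*)` for every `i`. -/
def wEffOf {n m : ℕ} (Z : Set (EuclideanSpace ℝ (Fin n)))
    (g : EuclideanSpace ℝ (Fin n) → EuclideanSpace ℝ (Fin m)) :
    Set (EuclideanSpace ℝ (Fin n)) :=
  {z ∈ Z | ¬ ∃ z' ∈ Z, ∀ i, g z' i < g z i}

/-- The set of weakly minimal points of the image `g(Z)`. -/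
def wMinOf {n m : ℕ} (Z : Set (EuclideanSpace ℝ (Fin n)))
    (g : EuclideanSpace ℝ (Fin n) → EuclideanSpace ℝ (Fin m)) :
    Set (EuclideanSpace ℝ (Fin m)) :=
  g '' wEffOf Z g

/-- `g : Z → ℝ^m` is P-convex iff each component is convex on `Z`. -/
def PConvexOn {n m : ℕ} (Z : Set (EuclideanSpace ℝ (Fin n)))
    (g : EuclideanSpace ℝ (Fin n) → EuclideanSpace ℝ (Fin m)) : Prop :=
  ∀ i, ConvexOn ℝ Z (fun z => g z i)

/-- `g : Z → ℝ^m` is strictly P-convex iff every component satisfies the strict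
convexity inequality for distinct points and λ ∈ (0,1). -/
def StrictPConvexOn {n m : ℕ} (Z : Set (EuclideanSpace ℝ (Fin n)))
    (g : EuclideanSpace ℝ (Fin n) → EuclideanSpace ℝ (Fin m)) : Prop :=
  ∀ z₁ ∈ Z, ∀ z₂ ∈ Z, z₁ ≠ z₂ → ∀ lam : ℝ, 0 < lam → lam < 1 → ∀ i,
    g (lam • z₁ + (1 - lam) • z₂) i < lam * g z₁ i + (1 - lam) * g z₂ i

/-- The recession cone `0⁺(A) = {d : a + t • d ∈ A, ∀ a ∈ A, ∀ t ≥ 0}`. -/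
def recCone {n : ℕ} (A : Set (EuclideanSpace ℝ (Fin n))) : Set (EuclideanSpace ℝ (Fin n)) :=
  {d | ∀ a ∈ A, ∀ t : ℝ, 0 ≤ t → a + t • d ∈ A}

/-- The Kuratowski lower limit of a sequence of sets. -/
def KLi {X : Type*} [TopologicalSpace X] (A : ℕ → Set X) : Set X :=
  {a | ∃ s : ℕ → X, (∀ᶠ k in atTop, s k ∈ A k) ∧ Tendsto s atTop (𝓝 a)}

/-- The Kuratowski upper limit of a sequence of sets. -/
def KLs {X : Type*} [TopologicalSpace X] (A : ℕ → Set X) : Set X :=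
  {a | ∃ φ : ℕ → ℕ, StrictMono φ ∧ ∃ s : ℕ → X,
    (∀ k, s k ∈ A (φ k)) ∧ Tendsto s atTop (𝓝 a)}

/-- The sequence of functions `g` converges continuously on `Z` to `g0`. -/
def ContConvOn {X Y : Type*} [TopologicalSpace X] [TopologicalSpace Y]
    (Z : Set X) (g : ℕ → X → Y) (g0 : X → Y) : Prop :=
  ∀ z ∈ Z, ∀ s : ℕ → X, (∀ k, s k ∈ Z) → Tendsto s atTop (𝓝 z) →
    Tendsto (fun k => g k (s k)) atTop (𝓝 (g0 z))

/-- If `φ_K → φ` continuously on a nonempty compact convex `A`, `φ` is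
strictly P-convex, and `Min φ ⊆ Li Min φ_K`, then `Eff φ ⊆ Li Eff φ_K`. -/
theorem stmt_12 {n m : ℕ}
    (A : Set (EuclideanSpace ℝ (Fin n))) (hAne : A.Nonempty)
    (hAcp : IsCompact A) (hAcv : Convex ℝ A)
    (φK : ℕ → EuclideanSpace ℝ (Fin n) → EuclideanSpace ℝ (Fin m))
    (φ : EuclideanSpace ℝ (Fin n) → EuclideanSpace ℝ (Fin m))
    (hcc : ContConvOn A φK φ)
    (hsc : StrictPConvexOn A φ)
    (hMin : minOf A φ ⊆ KLi (fun K => minOf A (φK K))) :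
    ∀ abar ∈ effOf A φ, ∃ αs : ℕ → EuclideanSpace ℝ (Fin n),
      (∀ᶠ K in atTop, αs K ∈ effOf A (φK K)) ∧ Tendsto αs atTop (𝓝 abar) := by
  classical
  rcases Nat.eq_zero_or_pos m with hm | hm
  · -- m = 0 : everything is efficient, use the constant sequence
    subst hm
    intro abar habar
    refine ⟨fun _ => abar, ?_, tendsto_const_nhds⟩
    refine Eventually.of_forall fun K => ⟨habar.1, ⟨abar, habar.1, rfl⟩, ?_⟩
    rintro ⟨l', _, hne, _⟩
    exact hne (Subsingleton.elim _ _)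
  · intro abar habar
    obtain ⟨habarA, hmin⟩ := habar
    set i0 : Fin m := ⟨0, hm⟩ with hi0
    -- injectivity at abar
    have hinj : ∀ a ∈ A, φ a = φ abar → a = abar := by
      intro a ha heq
      by_contra hne
      have hz : ((1:ℝ)/2) • a + (1 - (1:ℝ)/2) • abar ∈ A := by
        have := hAcv ha habarA (by norm_num : (0:ℝ) ≤ 1/2)
          (by norm_num : (0:ℝ) ≤ 1 - 1/2) (by norm_num)
        exact this
      have hlt : ∀ i, φ (((1:ℝ)/2) • a + (1 - (1:ℝ)/2) • abar) i < φ abar i := by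
        intro i
        have h := hsc a ha abar habarA hne (1/2) (by norm_num) (by norm_num) i
        rw [heq] at h
        linarith
      exact hmin.2 ⟨φ (((1:ℝ)/2) • a + (1 - (1:ℝ)/2) • abar), ⟨_, hz, rfl⟩,
        fun h => absurd (congrArg (fun v => v i0) h) (hlt i0).ne, fun i => (hlt i).le⟩
    obtain ⟨l, hl_ev, hl_tend⟩ := hMin hmin
    set αs : ℕ → EuclideanSpace ℝ (Fin n) :=
      fun K => if h : l K ∈ φK K '' A then h.choose else abar with hαs
    have hαsA : ∀ K, αs K ∈ A := by
      intro K
      rw [hαs]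
      dsimp only
      by_cases h : l K ∈ φK K '' A
      · rw [dif_pos h]; exact h.choose_spec.1
      · rw [dif_neg h]; exact habarA
    have hkey : ∀ K, l K ∈ minOf A (φK K) →
        φK K (αs K) = l K ∧ αs K ∈ effOf A (φK K) := by
      intro K hK
      have him : l K ∈ φK K '' A := hK.1
      have heq : αs K = him.choose := by rw [hαs]; exact dif_pos him
      refine ⟨by rw [heq]; exact him.choose_spec.2, ⟨?_, ?_⟩⟩
      · rw [heq]; exact him.choose_spec.1
      · rw [heq, him.choose_spec.2]; exact hK
    refine ⟨αs, hl_ev.mono fun K hK => (hkey K hK).2, ?_⟩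
    apply tendsto_of_subseq_tendsto
    intro ns hns
    obtain ⟨ms1, hms1, hns1⟩ := strictMono_subseq_of_tendsto_atTop hns
    obtain ⟨a', ha', ms2, hms2, hconv⟩ :=
      hAcp.tendsto_subseq (fun k => hαsA (ns (ms1 k)))
    set σ : ℕ → ℕ := fun k => ns (ms1 (ms2 k)) with hσ
    have hσmono : StrictMono σ := hns1.comp hms2
    have hσtop : Tendsto σ atTop atTop := hσmono.tendsto_atTop
    have hconv' : Tendsto (fun k => αs (σ k)) atTop (𝓝 a') := hconv
    -- auxiliary sequence filling in off-subsequence values with a'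
    set t : ℕ → EuclideanSpace ℝ (Fin n) :=
      fun j => if h : ∃ k, σ k = j then αs j else a' with ht
    have htA : ∀ j, t j ∈ A := by
      intro j
      rw [ht]
      dsimp only
      split
      · exact hαsA j
      · exact ha'
    have htσ : ∀ k, t (σ k) = αs (σ k) := fun k => dif_pos ⟨k, rfl⟩
    have httend : Tendsto t atTop (𝓝 a') := by
      rw [Metric.tendsto_atTop]
      intro ε hε
      obtain ⟨K0, hK0⟩ := (Metric.tendsto_atTop.1 hconv') ε hε
      refine ⟨σ K0, fun j hj => ?_⟩
      rw [ht]
      dsimp only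
      split
      · rename_i h
        obtain ⟨k, rfl⟩ := h
        have : K0 ≤ k := (hσmono.le_iff_le).1 hj
        exact hK0 k this
      · simpa using hε
    have h1 : Tendsto (fun j => φK j (t j)) atTop (𝓝 (φ a')) :=
      hcc a' ha' t htA httend
    have h2 : Tendsto (fun k => φK (σ k) (t (σ k))) atTop (𝓝 (φ a')) := h1.comp hσtop
    have h3 : Tendsto (fun k => l (σ k)) atTop (𝓝 (φ abar)) := hl_tend.comp hσtop
    have hEq : ∀ᶠ k in atTop, φK (σ k) (t (σ k)) = l (σ k) := by
      filter_upwards [hσtop.eventually hl_ev] with k hk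
      rw [htσ k]
      exact (hkey (σ k) hk).1
    have : φ a' = φ abar := tendsto_nhds_unique (h2.congr' hEq) h3
    have ha'eq : a' = abar := hinj a' ha' this
    exact ⟨ms1 ∘ ms2, by simpa [ha'eq] using hconv'⟩
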